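/- Let A be an affine space over a finite-dimensional real vector space T, let t ⊆ T be a linear subspace of translations, and let q be a finite-dimensional Lie algebra of affine vector fields on A containing the constant vector fields given by t. Suppose that at some point a ∈ A the evaluation map q → T_a A = T has image equal to t. If q normalizes the abelian algebra of infinitesimal translations (i.e., [ξ, v] is a translation for every ξ ∈ q and every translation field v), then the orbit of a under the connected group generated by q coincides with the orbit of a under exp(t), which is the affine subspace a + t. -/

import Mathlib

open Relation

variable {T : Type*} [NormedAddCommGroup T] [NormedSpace ℝ T] [FiniteDimensional ℝ T]

/-- One point flows to another along the time-one flow of a vector field belonging to a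
given family `F` of affine vector fields on `T`. -/
def FlowStep (F : Set (T →ᵃ[ℝ] T)) (x y : T) : Prop :=
  ∃ ξ ∈ F, ∃ γ : ℝ → T, γ 0 = x ∧ γ 1 = y ∧ ∀ s : ℝ, HasDerivAt γ (ξ (γ s)) s

/-- The orbit relation of the (connected) group generated by the family `F` of affine
vector fields: reachability by finitely many flow steps. -/
def Reaches (F : Set (T →ᵃ[ℝ] T)) : T → T → Prop :=
  Relation.ReflTransGen (FlowStep F)

/-- A flow step along a constant vector field translates by that vector. -/
lemma flowStep_const {v x y : T} {γ : ℝ → T} (h0 : γ 0 = x) (h1 : γ 1 = y)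
    (hd : ∀ s : ℝ, HasDerivAt γ v s) : y = x + v := by
  have key : ∀ u : ℝ, HasDerivAt (fun r : ℝ => γ r - r • v) 0 u := by
    intro u
    convert (hd u).sub ((hasDerivAt_id u).smul_const v) using 1 <;> simp [funext_iff]
  have h : γ 1 - (1:ℝ) • v = γ 0 - (0:ℝ) • v :=
    is_const_of_deriv_eq_zero (fun u => (key u).differentiableAt) (fun u => (key u).deriv) 1 0
  simp only [one_smul, zero_smul, sub_zero, h0, h1] at h
  rw [← h]; abel

/-- Invariance of the affine subspace `a + t` under a single flow step of `q`. -/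
lemma flowStep_invariant (q : Submodule ℝ (T →ᵃ[ℝ] T)) (t : Submodule ℝ T) (a : T)
    (heval : {w : T | ∃ ξ ∈ q, ξ a = w} = (t : Set T))
    (hnorm : ∀ ξ ∈ q, ∀ v ∈ t, ξ.linear v ∈ t)
    {x y : T} (hx : x - a ∈ t) (h : FlowStep (q : Set (T →ᵃ[ℝ] T)) x y) : y - a ∈ t := by
  obtain ⟨ξ, hξ, γ, h0, h1, hd⟩ := h
  obtain ⟨p, hp⟩ := Submodule.exists_isCompl t
  set π₀ : T →ₗ[ℝ] p := p.projectionOnto t hp.symm with hπ₀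
  have hker : ∀ z ∈ t, π₀ z = 0 := fun z hz =>
    Submodule.projectionOnto_apply_of_mem_right hp.symm hz
  have hdiff : ∀ z : T, z - (π₀ z : T) ∈ t := by
    intro z
    have h2 := Submodule.projection_add_projection_eq_self hp z
    have h3 : z - (π₀ z : T) = (t.projectionOnto p hp z : T) :=
      sub_eq_iff_eq_add.mpr h2.symm
    rw [h3]; exact Submodule.coe_mem _
  have hξt : ∀ v ∈ t, ξ.linear v ∈ t := hnorm ξ hξ
  have hξa : ξ a ∈ t := by
    have : ξ a ∈ {w : T | ∃ ξ ∈ q, ξ a = w} := ⟨ξ, hξ, rfl⟩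
    rwa [heval] at this
  set π : T →L[ℝ] p := π₀.toContinuousLinearMap with hπ
  set L : p →L[ℝ] p := (π₀ ∘ₗ ξ.linear ∘ₗ p.subtype).toContinuousLinearMap with hL
  have hLπ : ∀ z : T, π₀ (ξ.linear z) = L (π₀ z) := by
    intro z
    have : ξ.linear z - ξ.linear (π₀ z) ∈ t := by
      rw [← map_sub]; exact hξt _ (hdiff z)
    have h4 : π₀ (ξ.linear z - ξ.linear (π₀ z)) = 0 := hker _ this
    rw [map_sub, sub_eq_zero] at h4
    simpa [hL, LinearMap.toContinuousLinearMap] using h4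
  have hdecomp : ∀ z : T, ξ z = ξ.linear (z - a) + ξ a := by
    intro z
    have := ξ.map_vadd a (z - a)
    simpa [vadd_eq_add, sub_add_cancel] using this
  set f : ℝ → p := fun s => π (γ s - a) with hf
  have hf' : ∀ s : ℝ, HasDerivAt f (L (f s)) s := by
    intro s
    have h5 : HasDerivAt (fun r => γ r - a) (ξ (γ s)) s := (hd s).sub_const a
    have h6 := (π.hasFDerivAt.comp_hasDerivAt s h5)
    have h7 : π (ξ (γ s)) = L (f s) := by
      rw [hdecomp (γ s)]
      have : π₀ (ξ.linear (γ s - a) + ξ a) = L (π₀ (γ s - a)) := by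
        rw [map_add, hker _ hξa, add_zero, hLπ]
      exact this
    rw [← h7]; exact h6
  have hf0 : f 0 = 0 := by
    simp only [hf, h0]
    exact hker _ hx
  have hK : ∀ s : ℝ, LipschitzWith ‖L‖₊ (fun z : p => L z) := fun _ => L.lipschitz
  have heq : Set.EqOn f (fun _ => (0 : p)) (Set.Icc 0 1) := by
    apply ODE_solution_unique (v := fun _ z => L z) hK
    · exact fun s hs => (hf' s).continuousAt.continuousWithinAt
    · exact fun s hs => (hf' s).hasDerivWithinAt
    · exact continuousOn_const
    · intro s hs
      simpa using (hasDerivAt_const s (0 : p)).hasDerivWithinAt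
    · exact hf0
  have h8 : f 1 = 0 := heq (by norm_num : (1:ℝ) ∈ Set.Icc (0:ℝ) 1)
  have h9 : π₀ (y - a) = 0 := by
    have := h8
    simp only [hf, h1] at this
    exact this
  exact (Submodule.projectionOnto_apply_eq_zero_iff hp.symm).mp h9

/-- Let `q` be a finite-dimensional Lie algebra of affine vector fields on
an affine space (modeled here on `T` itself) containing the constant fields of a subspace
`t ⊆ T`, normalizing the translations with values staying in `t` (i.e. `[ξ, v] = ξ.linear v ∈ t`
for `ξ ∈ q`, `v ∈ t`), and whose evaluation at a point `a` has image exactly `t`. Then the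
orbit of `a` under the connected group generated by `q` is the orbit of `a` under `exp(t)`,
namely the affine subspace `a + t`. -/
theorem stmt7 (q : Submodule ℝ (T →ᵃ[ℝ] T)) (t : Submodule ℝ T) (a : T)
    (hconst : ∀ v ∈ t, AffineMap.const ℝ T v ∈ q)
    (heval : {w : T | ∃ ξ ∈ q, ξ a = w} = (t : Set T))
    (hnorm : ∀ ξ ∈ q, ∀ v ∈ t, ξ.linear v ∈ t) :
    {x : T | Reaches (q : Set (T →ᵃ[ℝ] T)) a x} =
      {x : T | Reaches ((fun v => AffineMap.const ℝ T v) '' (t : Set T)) a x} ∧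
    {x : T | Reaches (q : Set (T →ᵃ[ℝ] T)) a x} = {x : T | x - a ∈ t} := by
  -- orbit of q ⊆ a + t
  have sub1 : ∀ x, Reaches (q : Set (T →ᵃ[ℝ] T)) a x → x - a ∈ t := by
    intro x h
    induction h with
    | refl => simp
    | tail _ hstep ih => exact flowStep_invariant q t a heval hnorm ih hstep
  -- a + t ⊆ orbit of constants
  have sub2 : ∀ x : T, x - a ∈ t →
      Reaches ((fun v => AffineMap.const ℝ T v) '' (t : Set T)) a x := by
    intro x hx
    apply Relation.ReflTransGen.single
    refine ⟨AffineMap.const ℝ T (x - a), ⟨x - a, hx, rfl⟩,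
      fun s => a + s • (x - a), by simp, by simp, fun s => ?_⟩
    convert (hasDerivAt_const s a).add ((hasDerivAt_id s).smul_const (x - a)) using 1 <;> simp [funext_iff]
  -- orbit of constants ⊆ a + t
  have sub3 : ∀ x, Reaches ((fun v => AffineMap.const ℝ T v) '' (t : Set T)) a x →
      x - a ∈ t := by
    intro x h
    induction h with
    | refl => simp
    | tail _ hstep ih =>
      rename_i b c _
      obtain ⟨ξ, ⟨v, hv, rfl⟩, γ, h0, h1, hd⟩ := hstep
      have : c = b + v := flowStep_const h0 h1 (by simpa using hd)
      rw [this]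
      have : b + v - a = (b - a) + v := by abel
      rw [this]
      exact t.add_mem ih hv
  -- orbit of constants ⊆ orbit of q
  have sub4 : ∀ x, Reaches ((fun v => AffineMap.const ℝ T v) '' (t : Set T)) a x →
      Reaches (q : Set (T →ᵃ[ℝ] T)) a x := by
    intro x h
    refine Relation.ReflTransGen.mono (fun u w huw => ?_) a x h
    obtain ⟨ξ, ⟨v, hv, rfl⟩, hrest⟩ := huw
    exact ⟨AffineMap.const ℝ T v, hconst v hv, hrest⟩
  constructor
  · ext x
    exact ⟨fun h => sub2 x (sub1 x h), fun h => sub4 x h⟩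
  · ext x
    exact ⟨fun h => sub1 x h, fun h => sub4 x (sub2 x h)⟩
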